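/- For every side-information digraph G, the optimal index codelength is at most the minrank: ℓ*(G) ≤ minrank(G); in particular, for any n×n GF(2)-matrix M with M_{ii} = 1 for all i and M_{ij} = 0 whenever i ≠ j and i→j is not an arc of G, there is a linear index code for G of length equal to the rank of M. -/

import Mathlib

/-- `ε` is a (zero-error) index code for the side-information digraph `G` on `Fin n`:
each receiver `i` can decode `x i` from the codeword and its side information
`{x j : G i j}`. Messages and code symbols are bits, modeled as `ZMod 2`. -/
def IsIndexCode {n ℓ : ℕ} (G : Fin n → Fin n → Prop)
    (ε : (Fin n → ZMod 2) → (Fin ℓ → ZMod 2)) : Prop :=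
  ∀ i : Fin n, ∃ δ : (Fin ℓ → ZMod 2) → ({j : Fin n // G i j} → ZMod 2) → ZMod 2,
    ∀ x : Fin n → ZMod 2, δ (ε x) (fun j => x j.1) = x i

/-- The optimal index codelength `ℓ*(G)`. -/
noncomputable def optLen {n : ℕ} (G : Fin n → Fin n → Prop) : ℕ :=
  sInf {ℓ : ℕ | ∃ ε : (Fin n → ZMod 2) → (Fin ℓ → ZMod 2), IsIndexCode G ε}

/-- The subgraph of `G` induced on the vertex set `S` has no directed cycle. -/
def AcyclicOn {n : ℕ} (G : Fin n → Fin n → Prop) (S : Finset (Fin n)) : Prop :=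
  ∀ i : Fin n, ¬ Relation.TransGen (fun a b => G a b ∧ a ∈ S ∧ b ∈ S) i i

/-- `mais G`: the order of a maximum acyclic induced subgraph of `G`. -/
noncomputable def mais {n : ℕ} (G : Fin n → Fin n → Prop) : ℕ :=
  sSup {k : ℕ | ∃ S : Finset (Fin n), S.card = k ∧ AcyclicOn G S}

/-- `minrank G`: the minimum rank over `GF(2)` of a matrix fitting `G`
(ones on the diagonal, zero at off-diagonal non-arcs). -/
noncomputable def minrank {n : ℕ} (G : Fin n → Fin n → Prop) : ℕ :=
  sInf {r : ℕ | ∃ M : Matrix (Fin n) (Fin n) (ZMod 2),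
    (∀ i, M i i = 1) ∧ (∀ i j, i ≠ j → ¬ G i j → M i j = 0) ∧ M.rank = r}

/-- `G` contains an undirected cycle of length `k` (`k ≥ 3`): `k` distinct
vertices, cyclically arranged, with consecutive ones joined by edges
(arcs in both directions). -/
def HasUndirCycleLen {n : ℕ} (G : Fin n → Fin n → Prop) (k : ℕ) : Prop :=
  3 ≤ k ∧ ∃ v : ZMod k → Fin n, Function.Injective v ∧
    ∀ t : ZMod k, G (v t) (v (t + 1)) ∧ G (v (t + 1)) (v t)

/-- The set of edges of `G`, each edge `i - j` (both arcs present) recorded as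
the unordered pair `{i, j}`. -/
def edgeSet {n : ℕ} (G : Fin n → Fin n → Prop) : Set (Finset (Fin n)) :=
  {e | ∃ i j : Fin n, i ≠ j ∧ G i j ∧ G j i ∧ e = ({i, j} : Finset (Fin n))}

/-- The minrank upper bound: `ℓ*(G) ≤ minrank G`, and every matrix fitting `G`
yields a linear index code of length equal to its rank. -/
theorem stmt7 {n : ℕ} (G : Fin n → Fin n → Prop) (hG : ∀ i, ¬ G i i) :
    optLen G ≤ minrank G ∧
    ∀ M : Matrix (Fin n) (Fin n) (ZMod 2),
      (∀ i, M i i = 1) → (∀ i j, i ≠ j → ¬ G i j → M i j = 0) →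
      ∃ ε : (Fin n → ZMod 2) → (Fin M.rank → ZMod 2),
        IsLinearMap (ZMod 2) ε ∧ IsIndexCode G ε := by
  classical
  have main : ∀ M : Matrix (Fin n) (Fin n) (ZMod 2),
      (∀ i, M i i = 1) → (∀ i j, i ≠ j → ¬ G i j → M i j = 0) →
      ∃ ε : (Fin n → ZMod 2) → (Fin M.rank → ZMod 2),
        IsLinearMap (ZMod 2) ε ∧ IsIndexCode G ε := by
    intro M hdiag hfit
    have hr : Module.finrank (ZMod 2) (LinearMap.range M.mulVecLin) = M.rank := rfl
    let b : Module.Basis (Fin M.rank) (ZMod 2) (LinearMap.range M.mulVecLin) :=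
      (Module.finBasis (ZMod 2) (LinearMap.range M.mulVecLin)).reindex (finCongr hr)
    refine ⟨fun x => b.equivFun (M.mulVecLin.rangeRestrict x), ⟨fun x y => by simp,
      fun c x => by simp⟩, ?_⟩
    intro i
    refine ⟨fun c s => ((b.equivFun.symm c : LinearMap.range M.mulVecLin) : Fin n → ZMod 2) i
      - ∑ j : Fin n, (if h : G i j then M i j * s ⟨j, h⟩ else 0), ?_⟩
    intro x
    simp only [LinearEquiv.symm_apply_apply]
    have h1 : ((M.mulVecLin.rangeRestrict x : LinearMap.range M.mulVecLin) : Fin n → ZMod 2) i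
        = ∑ j, M i j * x j := by
      simp [Matrix.mulVecLin_apply, Matrix.mulVec, dotProduct]
    rw [h1]
    have h2 : ∀ j : Fin n, (if h : G i j then M i j * x j else 0)
        = if j = i then 0 else M i j * x j := by
      intro j
      by_cases hji : j = i
      · subst hji; simp [hG j]
      · by_cases hij : G i j
        · simp [hij, hji]
        · simp [hij, hji, hfit i j (Ne.symm hji) hij]
    simp only [h2]
    have h3 : (∑ j, M i j * x j) - (∑ j : Fin n, if j = i then 0 else M i j * x j)
        = ∑ j : Fin n, (if j = i then M i j * x j else 0) := by
      rw [← Finset.sum_sub_distrib]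
      apply Finset.sum_congr rfl
      intro j _
      by_cases hji : j = i <;> simp [hji]
    rw [h3, Finset.sum_ite_eq' Finset.univ i (fun j => M i j * x j)]
    simp [hdiag i]
  refine ⟨?_, main⟩
  have hne : {r : ℕ | ∃ M : Matrix (Fin n) (Fin n) (ZMod 2),
      (∀ i, M i i = 1) ∧ (∀ i j, i ≠ j → ¬ G i j → M i j = 0) ∧ M.rank = r}.Nonempty := by
    exact ⟨(1 : Matrix (Fin n) (Fin n) (ZMod 2)).rank, 1,
      fun i => Matrix.one_apply_eq i, fun i j hij _ => Matrix.one_apply_ne hij, rfl⟩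
  obtain ⟨M, hM1, hM2, hMr⟩ := Nat.sInf_mem hne
  obtain ⟨ε, _, hε⟩ := main M hM1 hM2
  calc optLen G ≤ M.rank := Nat.sInf_le ⟨ε, hε⟩
    _ = minrank G := hMr
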